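/- For every positive integer n, g(n) is not prime. -/
import Mathlib


/-- `Corr n k` says there is a square-product sequence (a nonempty finite set of
positive integers whose product is a perfect square) with least term `n` and
greatest term `k`. -/
def Corr (n k : ℕ) : Prop :=
  ∃ S : Finset ℕ, (∀ a ∈ S, 0 < a) ∧ IsSquare (∏ a ∈ S, a) ∧
    n ∈ S ∧ k ∈ S ∧ ∀ a ∈ S, n ≤ a ∧ a ≤ k

/-- Ron Graham's sequence: the least `k` such that there is a square-product
sequence with least term `n` and greatest term `k`. -/
noncomputable def g (n : ℕ) : ℕ := sInf {k | Corr n k}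

theorem g_not_prime (n : ℕ) (hn : 0 < n) : ¬ (g n).Prime := by
  intro hp
  have hne : n ≠ 4 * n := by omega
  have hcorr : Corr n (4 * n) := by
    refine ⟨{n, 4 * n}, ?_, ?_, ?_, ?_, ?_⟩
    · intro a ha
      simp only [Finset.mem_insert, Finset.mem_singleton] at ha
      rcases ha with rfl | rfl <;> omega
    · rw [Finset.prod_pair hne]
      exact ⟨2 * n, by ring⟩
    · simp
    · simp
    · intro a ha
      simp only [Finset.mem_insert, Finset.mem_singleton] at ha
      rcases ha with rfl | rfl <;> omega
  have hmem : Corr n (g n) := by have : {k | Corr n k}.Nonempty := ⟨4 * n, hcorr⟩; exact Nat.sInf_mem this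
  obtain ⟨S, hpos, hsq, hnS, hgS, hbd⟩ := hmem
  set p := g n with hpdef
  -- product = p * (product over S.erase p)
  have hprod : ∏ a ∈ S, a = p * ∏ a ∈ S.erase p, a := by
    rw [← Finset.prod_erase_mul _ _ hgS]; ring
  have hndvd : ¬ p ∣ ∏ a ∈ S.erase p, a := by
    intro hdvd
    obtain ⟨a, ha, hpa⟩ := hp.prime.exists_mem_finset_dvd hdvd
    have haS := Finset.mem_of_mem_erase ha
    have hane : a ≠ p := Finset.ne_of_mem_erase ha
    have h1 : a ≤ p := (hbd a haS).2
    have h2 : 0 < a := hpos a haS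
    have := Nat.le_of_dvd h2 hpa
    omega
  obtain ⟨r, hr⟩ := hsq
  rw [hprod] at hr
  have hpr : p ∣ r := hp.dvd_of_dvd_pow (n := 2) (by rw [pow_two, ← hr]; exact Dvd.intro _ rfl)
  obtain ⟨s, rfl⟩ := hpr
  have hpm : p * ∏ a ∈ S.erase p, a = p * (p * (s * s)) := by rw [hr]; ring
  have hp0 : 0 < p := hp.pos
  have : ∏ a ∈ S.erase p, a = p * (s * s) := by
    exact Nat.eq_of_mul_eq_mul_left hp0 hpm
  exact hndvd ⟨s * s, this⟩
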